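/- Let V be a finite-dimensional vector space over ℚ with a basis b : ι → V indexed by a finite type ι, and let w : V →ₗ[ℚ] V be a linear endomorphism. Set I := {i ∈ ι | w (b i) = b i}, and for J ⊆ ι let L_J denote the ℤ-submodule of V generated by {b i : i ∈ J}. Then the subgroup K := {μ ∈ L_{ι∖I} | w μ + μ ∈ L_I} of V is a free abelian group of rank equal to finrank_ℚ (ker (w + 1)), where w + 1 denotes the endomorphism v ↦ w v + v. -/

import Mathlib

open Submodule Module

private lemma exists_int_smul_mem_span {V : Type*} [AddCommGroup V] [Module ℚ V]
    (s : Set V) (x : V) (hx : x ∈ span ℚ s) :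
    ∃ n : ℤ, n ≠ 0 ∧ n • x ∈ span ℤ s := by
  obtain ⟨t, hts, hxt⟩ := Submodule.mem_span_finite_of_mem_span hx
  obtain ⟨f, -, hf⟩ := mem_span_finset.mp hxt
  obtain ⟨n, hn⟩ := IsLocalization.exist_integer_multiples (nonZeroDivisors ℤ) t f
  refine ⟨(n : ℤ), nonZeroDivisors.coe_ne_zero n, ?_⟩
  rw [← hf, Finset.smul_sum]
  refine Submodule.sum_mem _ fun i hi => ?_
  obtain ⟨m, hm⟩ := hn i hi
  have hq : ((m : ℚ)) = ((n : ℤ) : ℚ) * f i := by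
    simpa [zsmul_eq_mul] using hm
  have : ((n : ℤ)) • (f i • i) = m • i := by
    rw [← Int.cast_smul_eq_zsmul ℚ ((n : ℤ)), ← Int.cast_smul_eq_zsmul ℚ m, smul_smul, ← hq]
  rw [this]
  exact Submodule.smul_mem _ m (Submodule.subset_span (hts hi))

/-- Let `V` be a finite-dimensional `ℚ`-vector space with basis `b : ι → V`, `ι` finite, and let
`w : V →ₗ[ℚ] V`.  Let `I = {i | w (b i) = b i}` and, for `J ⊆ ι`, let `L_J` be the
`ℤ`-submodule generated by `{b i : i ∈ J}`.  Then the subgroup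
`K = {μ ∈ L_{ι∖I} | w μ + μ ∈ L_I}` is a free abelian group of rank
`finrank ℚ (ker (w + 1))`. -/
theorem lattice_K_free_of_rank_ker {V : Type*} [AddCommGroup V] [Module ℚ V]
    [FiniteDimensional ℚ V] {ι : Type*} [Fintype ι] (b : Basis ι ℚ V)
    (w : V →ₗ[ℚ] V)
    (I : Set ι) (hI : I = {i | w (b i) = b i})
    (K : Submodule ℤ V)
    (hK : K = Submodule.span ℤ (b '' Iᶜ) ⊓
      Submodule.comap ((w + LinearMap.id).restrictScalars ℤ) (Submodule.span ℤ (b '' I))) :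
    Module.Free ℤ K ∧
    Module.finrank ℤ K = Module.finrank ℚ (LinearMap.ker (w + LinearMap.id)) := by
  classical
  set U : Submodule ℚ V := span ℚ (b '' I) with hU
  set W : Submodule ℚ V := span ℚ (b '' Iᶜ) with hW
  set T : V →ₗ[ℚ] V := w + LinearMap.id with hT
  have hTapp : ∀ x : V, T x = w x + x := fun x => rfl
  -- `w` fixes `U` pointwise
  have hwU : ∀ u ∈ U, w u = u := by
    intro u hu
    induction hu using Submodule.span_induction with
    | mem x hx =>
      obtain ⟨i, hi, rfl⟩ := hx
      rw [hI] at hi; exact hi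
    | zero => simp
    | add x y _ _ hx hy => rw [map_add, hx, hy]
    | smul a x _ hx => rw [map_smul, hx]
  have hTU : ∀ u ∈ U, T u = (2 : ℚ) • u := fun u hu => by
    rw [hTapp, hwU u hu, two_smul]
  -- the projection onto `W` along `U`
  set p : V →ₗ[ℚ] V := b.constr ℚ (fun i => if i ∈ I then 0 else b i) with hp
  have hpb : ∀ i, p (b i) = if i ∈ I then 0 else b i := fun i => b.constr_basis ℚ _ i
  have hpW : ∀ x ∈ W, p x = x := by
    intro x hx
    induction hx using Submodule.span_induction with
    | mem y hy =>
      obtain ⟨i, hi, rfl⟩ := hy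
      rw [hpb i, if_neg hi]
    | zero => simp
    | add x y _ _ hx hy => rw [map_add, hx, hy]
    | smul a x _ hx => rw [map_smul, hx]
  have hpU : ∀ u ∈ U, p u = 0 := by
    intro u hu
    induction hu using Submodule.span_induction with
    | mem y hy =>
      obtain ⟨i, hi, rfl⟩ := hy
      rw [hpb i, if_pos hi]
    | zero => simp
    | add x y _ _ hx hy => rw [map_add, hx, hy, add_zero]
    | smul a x _ hx => rw [map_smul, hx, smul_zero]
  have hpmem : ∀ x : V, p x ∈ W := by
    intro x
    rw [hp, Basis.constr_apply_fintype]
    refine Submodule.sum_mem _ fun i _ => ?_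
    by_cases hi : i ∈ I
    · simp [hi]
    · rw [if_neg hi]
      exact Submodule.smul_mem _ _ (subset_span ⟨i, hi, rfl⟩)
  have hqmem : ∀ x : V, x - p x ∈ U := by
    intro x
    have hpx : p x = ∑ i, b.equivFun x i • (if i ∈ I then 0 else b i) := by
      rw [hp, Basis.constr_apply_fintype]
    have hxx : x = ∑ i, b.equivFun x i • b i := (b.sum_equivFun x).symm
    have h1 : x - p x = ∑ i, b.equivFun x i • (if i ∈ I then b i else 0) := by
      rw [hpx]
      nth_rewrite 1 [hxx]
      rw [← Finset.sum_sub_distrib]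
      refine Finset.sum_congr rfl fun i _ => ?_
      rw [← smul_sub]
      congr 1
      by_cases hi : i ∈ I <;> simp [hi]
    rw [h1]
    refine Submodule.sum_mem _ fun i _ => ?_
    by_cases hi : i ∈ I
    · rw [if_pos hi]
      exact Submodule.smul_mem _ _ (subset_span ⟨i, hi, rfl⟩)
    · simp [hi]
  -- the rational analogue of K
  set KQ : Submodule ℚ V := W ⊓ Submodule.comap T U with hKQ
  -- `T (p x) = -(2 • (x - p x))` for `x ∈ ker T`
  have keyT : ∀ x ∈ LinearMap.ker T, T (p x) = -((2 : ℚ) • (x - p x)) := by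
    intro x hx
    have hx0 : T x = 0 := hx
    have : T (p x) = T x - T (x - p x) := by rw [map_sub, sub_sub_cancel]
    rw [this, hx0, hTU _ (hqmem x), zero_sub]
  -- the equivalence `ker T ≃ KQ`
  have φmem : ∀ y : LinearMap.ker T, (p ∘ₗ (LinearMap.ker T).subtype) y ∈ KQ := by
    rintro ⟨x, hx⟩
    refine ⟨hpmem x, ?_⟩
    show T (p x) ∈ U
    rw [keyT x hx]
    exact neg_mem (Submodule.smul_mem _ _ (hqmem x))
  have ψmem : ∀ y : KQ,
      ((LinearMap.id - (1/2 : ℚ) • T) ∘ₗ KQ.subtype) y ∈ LinearMap.ker T := by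
    rintro ⟨x, hxW, hxU⟩
    have hxU' : T x ∈ U := hxU
    show T (x - (1/2 : ℚ) • T x) = 0
    rw [map_sub, map_smul, hTU _ hxU', smul_smul]
    norm_num
  set φ : (LinearMap.ker T) →ₗ[ℚ] KQ :=
    LinearMap.codRestrict KQ (p ∘ₗ (LinearMap.ker T).subtype) φmem with hφ
  set ψ : KQ →ₗ[ℚ] (LinearMap.ker T) :=
    LinearMap.codRestrict (LinearMap.ker T) ((LinearMap.id - (1/2 : ℚ) • T) ∘ₗ KQ.subtype) ψmem
      with hψ
  have h1 : φ.comp ψ = LinearMap.id := by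
    ext ⟨x, hxW, hxU⟩
    have hxU' : T x ∈ U := hxU
    show p (x - (1/2 : ℚ) • T x) = x
    rw [map_sub, map_smul, hpW x hxW, hpU _ hxU', smul_zero, sub_zero]
  have h2 : ψ.comp φ = LinearMap.id := by
    ext ⟨x, hx⟩
    show p x - (1/2 : ℚ) • T (p x) = x
    rw [keyT x hx, smul_neg, smul_smul, sub_neg_eq_add]
    norm_num
  have e : (LinearMap.ker T) ≃ₗ[ℚ] KQ := LinearEquiv.ofLinear φ ψ h1 h2
  -- ℤ-side: K is free and finitely generated
  have hbZ : LinearIndependent ℤ b := by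
    refine b.linearIndependent.restrict_scalars ?_
    intro x y h
    have : (x : ℚ) = (y : ℚ) := by simpa [zsmul_eq_mul] using h
    exact_mod_cast this
  set L : Submodule ℤ V := span ℤ (Set.range b) with hL
  have hKL : K ≤ L := by
    rw [hK, hL]
    exact le_trans inf_le_left (span_mono (Set.image_subset_range b _))
  have e1 : (K.comap L.subtype) ≃ₗ[ℤ] K := Submodule.comapSubtypeEquivOfLe hKL
  obtain ⟨n, c⟩ := Submodule.basisOfPid (Basis.span hbZ) (K.comap L.subtype)
  let c' : Basis (Fin n) ℤ K := c.map e1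
  refine ⟨Module.Free.of_basis c', ?_⟩
  have hrankK : Module.finrank ℤ K = n := by
    rw [finrank_eq_card_basis c', Fintype.card_fin]
  set v : Fin n → V := fun i => (c' i : V) with hv
  have hliZ : LinearIndependent ℤ v := c'.linearIndependent.map' K.subtype K.ker_subtype
  have hliQ : LinearIndependent ℚ v := (LinearIndependent.iff_fractionRing ℤ ℚ).mp hliZ
  have hspanv : span ℤ (Set.range v) = K := by
    have h := congrArg (Submodule.map K.subtype) c'.span_eq
    rw [Submodule.map_span, Submodule.map_top, Submodule.range_subtype] at h
    rw [hv]
    rw [show Set.range (fun i => (c' i : V)) = K.subtype '' Set.range c' from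
      (Set.range_comp _ _)]
    exact h
  -- K ⊆ KQ
  have hKsubKQ : ∀ x ∈ K, x ∈ KQ := by
    intro x hx
    rw [hK] at hx
    obtain ⟨hx1, hx2⟩ := hx
    refine ⟨?_, ?_⟩
    · exact Submodule.span_subset_span ℤ ℚ _ hx1
    · show T x ∈ U
      exact Submodule.span_subset_span ℤ ℚ _ hx2
  -- span ℚ (range v) = KQ
  have hspanQ : span ℚ (Set.range v) = KQ := by
    apply le_antisymm
    · rw [Submodule.span_le]
      intro x hx
      exact hKsubKQ x (hspanv ▸ subset_span hx)
    · intro x hx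
      obtain ⟨hxW, hxU⟩ := hx
      have hxU' : T x ∈ U := hxU
      obtain ⟨n1, hn1, h1⟩ := exists_int_smul_mem_span _ x hxW
      obtain ⟨n2, hn2, h2⟩ := exists_int_smul_mem_span _ (T x) hxU'
      have hmem : (n1 * n2) • x ∈ K := by
        rw [hK]
        refine ⟨?_, ?_⟩
        · rw [mul_comm, mul_smul]
          exact Submodule.smul_mem _ _ h1
        · show T ((n1 * n2) • x) ∈ span ℤ (b '' I)
          rw [map_zsmul, mul_smul]
          exact Submodule.smul_mem _ _ h2
      have hx' : x = (((n1 * n2 : ℤ) : ℚ))⁻¹ • ((n1 * n2) • x) := by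
        rw [← Int.cast_smul_eq_zsmul ℚ, smul_smul,
          inv_mul_cancel₀ (by exact_mod_cast mul_ne_zero hn1 hn2), one_smul]
      rw [hx']
      refine Submodule.smul_mem _ _ ?_
      have : (K : Set V) ⊆ span ℚ (Set.range v) := by
        rw [← hspanv]
        exact Submodule.span_subset_span ℤ ℚ _
      exact this hmem
  rw [hrankK]
  have hcard := finrank_span_eq_card hliQ
  rw [Fintype.card_fin] at hcard
  rw [← hcard, hspanQ]
  exact (LinearEquiv.finrank_eq e).symm
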